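/- Rule 14 conserves the density of the block 10: for any shift-invariant probability measure ν on {0,1}^ℤ, the pushforward measure satisfies (Φ_*ν){s : s(0)=1, s(1)=0} = ν{s : s(0)=1, s(1)=0}. -/
import Mathlib


open MeasureTheory Filter
open scoped ENNReal

/-- Local rule of elementary CA rule 14: output is 1 exactly on inputs
(0,0,1), (0,1,0), (0,1,1). -/
def rule14 (x0 x1 x2 : Bool) : Bool := !x0 && (x1 || x2)

/-- Global map of rule 14 on configurations `ℤ → Bool`. -/
def phi (s : ℤ → Bool) : ℤ → Bool := fun i => rule14 (s (i - 1)) (s i) (s (i + 1))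

lemma meas_pair (a b : ℤ) (x y : Bool) :
    MeasurableSet {s : ℤ → Bool | s a = x ∧ s b = y} := by
  have h1 : {s : ℤ → Bool | s a = x ∧ s b = y}
      = (fun s : ℤ → Bool => s a) ⁻¹' {x} ∩ (fun s : ℤ → Bool => s b) ⁻¹' {y} := by
    ext s; simp [Set.mem_setOf_eq]
  rw [h1]
  exact ((measurable_pi_apply a) (measurableSet_singleton x)).inter
    ((measurable_pi_apply b) (measurableSet_singleton y))

lemma meas_one (a : ℤ) (x : Bool) :
    MeasurableSet {s : ℤ → Bool | s a = x} := by
  have : {s : ℤ → Bool | s a = x} = (fun s : ℤ → Bool => s a) ⁻¹' {x} := by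
    ext s; simp
  rw [this]
  exact (measurable_pi_apply a) (measurableSet_singleton x)

/-- Rule 14 conserves the density of the block `10`. -/
theorem rule14_conserves_10
    (ν : Measure (ℤ → Bool)) [IsProbabilityMeasure ν]
    (hshift : ν.map (fun s : ℤ → Bool => fun i => s (i + 1)) = ν) :
    (ν.map phi) {s | s 0 = true ∧ s 1 = false}
      = ν {s | s 0 = true ∧ s 1 = false} := by
  have hσ : Measurable (fun s : ℤ → Bool => fun i => s (i + 1)) :=
    measurable_pi_lambda _ (fun i => measurable_pi_apply _)
  have hφ : Measurable phi := by
    apply measurable_pi_lambda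
    intro i
    have : (fun s : ℤ → Bool => rule14 (s (i - 1)) (s i) (s (i + 1))) ⁻¹' {true}
        = {s : ℤ → Bool | s (i-1) = false} ∩
          ({s : ℤ → Bool | s i = true} ∪ {s : ℤ → Bool | s (i+1) = true}) := by
      ext s
      simp only [Set.mem_preimage, Set.mem_singleton_iff, Set.mem_inter_iff,
        Set.mem_union, Set.mem_setOf_eq, rule14]
      cases s (i-1) <;> cases s i <;> cases s (i+1) <;> simp
    show Measurable fun s : ℤ → Bool => rule14 (s (i - 1)) (s i) (s (i + 1))
    refine measurable_to_bool ?_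
    rw [this]
    exact (meas_one _ _).inter ((meas_one _ _).union (meas_one _ _))
  -- shift invariance lemma for pair sets
  have shift_pair : ∀ (a b : ℤ) (x y : Bool),
      ν {s : ℤ → Bool | s a = x ∧ s b = y} = ν {s : ℤ → Bool | s (a+1) = x ∧ s (b+1) = y} := by
    intro a b x y
    conv_lhs => rw [← hshift]
    rw [Measure.map_apply hσ (meas_pair a b x y)]
    congr 1
  have shift_one : ∀ (a : ℤ) (x : Bool),
      ν {s : ℤ → Bool | s a = x} = ν {s : ℤ → Bool | s (a+1) = x} := by
    intro a x
    conv_lhs => rw [← hshift]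
    rw [Measure.map_apply hσ (meas_one a x)]
    congr 1
  -- compute the preimage under phi
  rw [Measure.map_apply hφ (meas_pair 0 1 true false)]
  have hpre : phi ⁻¹' {s : ℤ → Bool | s 0 = true ∧ s 1 = false}
      = {s : ℤ → Bool | s (-1) = false ∧ s 0 = true} := by
    ext s
    simp only [Set.mem_preimage, Set.mem_setOf_eq, phi, rule14]
    norm_num
    cases s (-1) <;> cases s 0 <;> cases s 1 <;> cases s 2 <;> simp
  rw [hpre]
  have h1 : ν {s : ℤ → Bool | s (-1) = false ∧ s 0 = true}
      = ν {s : ℤ → Bool | s 0 = false ∧ s 1 = true} := by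
    have := shift_pair (-1) 0 false true
    simpa using this
  rw [h1]
  -- now show ν {s0=false, s1=true} = ν {s0=true, s1=false}
  have split0 : ν {s : ℤ → Bool | s 0 = true}
      = ν {s : ℤ → Bool | s 0 = true ∧ s 1 = true} + ν {s : ℤ → Bool | s 0 = true ∧ s 1 = false} := by
    rw [← measure_union ?_ (meas_pair 0 1 true false)]
    · congr 1
      ext s
      simp only [Set.mem_union, Set.mem_setOf_eq]
      cases s 0 <;> cases s 1 <;> simp
    · rw [Set.disjoint_left]
      rintro s ⟨_, h⟩ ⟨_, h'⟩
      rw [h] at h'; exact Bool.noConfusion h'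
  have split1 : ν {s : ℤ → Bool | s 1 = true}
      = ν {s : ℤ → Bool | s 0 = true ∧ s 1 = true} + ν {s : ℤ → Bool | s 0 = false ∧ s 1 = true} := by
    rw [← measure_union ?_ (meas_pair 0 1 false true)]
    · congr 1
      ext s
      simp only [Set.mem_union, Set.mem_setOf_eq]
      cases s 0 <;> cases s 1 <;> simp
    · rw [Set.disjoint_left]
      rintro s ⟨h, _⟩ ⟨h', _⟩
      rw [h] at h'; exact Bool.noConfusion h'
  have h01 : ν {s : ℤ → Bool | s 0 = true} = ν {s : ℤ → Bool | s 1 = true} := by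
    have := shift_one 0 true
    simpa using this
  rw [split0, split1] at h01
  have := (ENNReal.add_right_inj (measure_ne_top ν _)).mp h01
  exact this.symm
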